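/- arXiv:1710.10865 — 2 statements merged into one kernel-verified Lean document; each statement's English description precedes it below -/
import Mathlib

section
/- Fix x ∈ (0,1) and c > 0, and for d ∈ ℕ let j_{d,x} = min{d, ⌊c d^x⌋}. If (a_j) is a positive sequence with ∑_{j=1}^d a_j ∼ c ln d as d → ∞, then (∑_{j=1}^{j_{d,x}} a_j)/(∑_{j=1}^d a_j) → x as d → ∞. -/
open Filter Finset

theorem stmt12 (x c : ℝ) (hx : x ∈ Set.Ioo (0:ℝ) 1) (hc : 0 < c)
    (a : ℕ → ℝ) (hapos : ∀ j, 0 < a j)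
    (hsum : Tendsto (fun d => (∑ j ∈ Finset.Icc 1 d, a j) / (c * Real.log d))
      atTop (nhds 1)) :
    Tendsto (fun d =>
        (∑ j ∈ Finset.Icc 1 (min d (Nat.floor (c * (d:ℝ) ^ x))), a j) /
          (∑ j ∈ Finset.Icc 1 d, a j)) atTop (nhds x) := by
  obtain ⟨hx0, hx1⟩ := hx
  set S : ℕ → ℝ := fun d => ∑ j ∈ Finset.Icc 1 d, a j with hSdef
  set J : ℕ → ℕ := fun d => Nat.floor (c * (d:ℝ) ^ x) with hJdef
  have hSpos : ∀ d, 1 ≤ d → 0 < S d := by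
    intro d hd
    exact Finset.sum_pos (fun j _ => hapos j) (Finset.nonempty_Icc.mpr hd)
  have hcdx : Tendsto (fun d : ℕ => c * (d:ℝ) ^ x) atTop atTop :=
    Tendsto.const_mul_atTop hc
      ((tendsto_rpow_atTop hx0).comp tendsto_natCast_atTop_atTop)
  have hJtop : Tendsto J atTop atTop := tendsto_nat_floor_atTop.comp hcdx
  have hlogd : Tendsto (fun d : ℕ => Real.log d) atTop atTop :=
    Real.tendsto_log_atTop.comp tendsto_natCast_atTop_atTop
  -- eventually c * d^x ≤ d
  have hE1 : ∀ᶠ d : ℕ in atTop, c * (d:ℝ) ^ x ≤ d := by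
    have h0 : Tendsto (fun d : ℕ => c * (d:ℝ) ^ (x - 1)) atTop (nhds 0) := by
      have h := (tendsto_rpow_neg_atTop (by linarith : (0:ℝ) < 1 - x)).comp
        tendsto_natCast_atTop_atTop
      have h' := h.const_mul c
      simpa [neg_sub] using h'
    have h1 : ∀ᶠ d : ℕ in atTop, c * (d:ℝ) ^ (x - 1) < 1 :=
      h0.eventually (gt_mem_nhds one_pos)
    filter_upwards [h1, eventually_ge_atTop 1] with d hd hd1
    have hdpos : (0:ℝ) < d := by exact_mod_cast hd1
    have hpow : (d:ℝ) ^ x = (d:ℝ) ^ (x - 1) * d := by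
      rw [← Real.rpow_add_one (ne_of_gt hdpos)]
      ring_nf
    calc c * (d:ℝ) ^ x = (c * (d:ℝ) ^ (x - 1)) * d := by rw [hpow]; ring
      _ ≤ 1 * d := mul_le_mul_of_nonneg_right (le_of_lt hd) (le_of_lt hdpos)
      _ = d := one_mul _
  have hE2 : ∀ᶠ d : ℕ in atTop, (2:ℝ) ≤ c * (d:ℝ) ^ x := hcdx.eventually_ge_atTop 2
  have hE3 : ∀ᶠ d : ℕ in atTop, 2 ≤ d := eventually_ge_atTop 2
  have hJ2 : ∀ᶠ d : ℕ in atTop, 2 ≤ J d := hJtop.eventually_ge_atTop 2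
  -- factor A
  have hA : Tendsto (fun d => S (J d) / (c * Real.log (J d))) atTop (nhds 1) :=
    hsum.comp hJtop
  -- factor C
  have hC : Tendsto (fun d : ℕ => (c * Real.log d) / S d) atTop (nhds 1) := by
    have h := hsum.inv₀ one_ne_zero
    simp only [inv_div, inv_one] at h
    exact h
  -- bounds on log (J d)
  have hlogJ_bounds : ∀ᶠ d : ℕ in atTop,
      Real.log c + x * Real.log d - Real.log 2 ≤ Real.log (J d) ∧
      Real.log (J d) ≤ Real.log c + x * Real.log d := by
    filter_upwards [hE2, hE3] with d h2 h3
    have hdpos : (0:ℝ) < d := by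
      have : (2:ℝ) ≤ d := by exact_mod_cast h3
      linarith
    have hcdpos : (0:ℝ) < c * (d:ℝ) ^ x := by positivity
    have hJlow : c * (d:ℝ) ^ x / 2 ≤ (J d : ℝ) := by
      have h4 : c * (d:ℝ) ^ x - 1 < (J d : ℝ) := Nat.sub_one_lt_floor _
      linarith
    have hJhigh : (J d : ℝ) ≤ c * (d:ℝ) ^ x := Nat.floor_le (le_of_lt hcdpos)
    have hJpos : (0:ℝ) < (J d : ℝ) := lt_of_lt_of_le (by linarith) hJlow
    constructor
    · calc Real.log c + x * Real.log d - Real.log 2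
          = Real.log (c * (d:ℝ) ^ x / 2) := by
            rw [Real.log_div (ne_of_gt hcdpos) two_ne_zero,
              Real.log_mul (ne_of_gt hc) (by positivity),
              Real.log_rpow hdpos]
      _ ≤ Real.log (J d) := Real.log_le_log (by linarith) hJlow
    · calc Real.log (J d) ≤ Real.log (c * (d:ℝ) ^ x) :=
            Real.log_le_log hJpos hJhigh
      _ = Real.log c + x * Real.log d := by
            rw [Real.log_mul (ne_of_gt hc) (by positivity), Real.log_rpow hdpos]
  -- factor B
  have hB : Tendsto (fun d : ℕ => Real.log (J d) / Real.log d) atTop (nhds x) := by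
    have hlow : Tendsto (fun d : ℕ => (Real.log c - Real.log 2) / Real.log d + x)
        atTop (nhds x) := by
      have := (tendsto_const_nhds (x := Real.log c - Real.log 2)
        (f := atTop (α := ℕ))).div_atTop hlogd
      simpa using this.add (tendsto_const_nhds (x := x))
    have hhigh : Tendsto (fun d : ℕ => Real.log c / Real.log d + x)
        atTop (nhds x) := by
      have := (tendsto_const_nhds (x := Real.log c)
        (f := atTop (α := ℕ))).div_atTop hlogd
      simpa using this.add (tendsto_const_nhds (x := x))
    apply tendsto_of_tendsto_of_tendsto_of_le_of_le' hlow hhigh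
    · filter_upwards [hlogJ_bounds, hE3] with d hb h3
      have hld : (0:ℝ) < Real.log d := Real.log_pos (by exact_mod_cast h3)
      rw [div_add' _ _ _ (ne_of_gt hld)]
      exact div_le_div_of_nonneg_right (by linarith [hb.1]) hld.le
    · filter_upwards [hlogJ_bounds, hE3] with d hb h3
      have hld : (0:ℝ) < Real.log d := Real.log_pos (by exact_mod_cast h3)
      rw [div_add' _ _ _ (ne_of_gt hld)]
      exact div_le_div_of_nonneg_right (by linarith [hb.2]) hld.le
  -- combine
  have hABC : Tendsto (fun d : ℕ =>
      S (J d) / (c * Real.log (J d)) * (Real.log (J d) / Real.log d) *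
        ((c * Real.log d) / S d)) atTop (nhds x) := by
    have := (hA.mul hB).mul hC
    simpa using this
  refine hABC.congr' ?_
  filter_upwards [hE1, hE3, hJ2] with d h1 h3 hj2
  have hmin : min d (J d) = J d := by
    apply min_eq_right
    have := Nat.floor_le_floor (R := ℝ) h1
    simpa [hJdef] using this
  have hld : (0:ℝ) < Real.log d := Real.log_pos (by exact_mod_cast h3)
  have hlj : (0:ℝ) < Real.log (J d) := Real.log_pos (by exact_mod_cast hj2)
  have hsd : (0:ℝ) < S d := hSpos d (by omega)
  rw [hmin]
  field_simp
  rw [show (∑ j ∈ Finset.Icc 1 d, a j) = S d from rfl,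
    show (∑ j ∈ Finset.Icc 1 (J d), a j) = S (J d) from rfl]
  rw [mul_div_cancel_left₀ _ hsd.ne']
end

section
/- Fix x < 0 and τ ∈ (0,1), and for d ∈ ℕ let j_{d,x} = max{j ∈ ℕ : j ≤ d e^{x/τ}} (for d large enough that this set is nonempty). If a_j > 0 and ∑_{j=1}^d a_j ∼ C d^{1−τ} for some C > 0, then (∑_{j=1}^{j_{d,x}} a_j)/(∑_{j=1}^d a_j) → exp((1−τ)x/τ) as d → ∞. -/
open Filter Finset

theorem stmt13 (x τ : ℝ) (hx : x < 0) (hτ : τ ∈ Set.Ioo (0:ℝ) 1)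
    (a : ℕ → ℝ) (hapos : ∀ j, 0 < a j) (C : ℝ) (hC : 0 < C)
    (hsum : Tendsto (fun d => (∑ j ∈ Finset.Icc 1 d, a j) / (C * (d:ℝ) ^ (1-τ)))
      atTop (nhds 1)) :
    Tendsto (fun d : ℕ =>
        (∑ j ∈ Finset.Icc 1 (Nat.floor ((d:ℝ) * Real.exp (x/τ))), a j) /
          (∑ j ∈ Finset.Icc 1 d, a j)) atTop (nhds (Real.exp ((1-τ)*x/τ))) := by
  obtain ⟨hτ0, hτ1⟩ := hτ
  set c : ℝ := Real.exp (x/τ) with hc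
  have hc0 : 0 < c := Real.exp_pos _
  set m : ℕ → ℕ := fun d => Nat.floor ((d:ℝ) * c) with hm
  set S : ℕ → ℝ := fun d => ∑ j ∈ Finset.Icc 1 d, a j with hS
  have hmtop : Tendsto m atTop atTop := by
    apply tendsto_nat_floor_atTop.comp
    exact (tendsto_natCast_atTop_atTop (R := ℝ)).atTop_mul_const hc0
  have hdiv : Tendsto (fun d : ℕ => (m d : ℝ) / d) atTop (nhds c) := by
    have h := (tendsto_nat_floor_mul_div_atTop hc0.le).comp
      (tendsto_natCast_atTop_atTop (R := ℝ))
    simp only [Function.comp_def, mul_comm c] at h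
    exact h
  have h2 : Tendsto (fun d : ℕ => ((m d : ℝ) / d) ^ (1-τ)) atTop
      (nhds (c ^ (1-τ))) := hdiv.rpow_const (Or.inl hc0.ne')
  have hcpow : c ^ (1-τ) = Real.exp ((1-τ)*x/τ) := by
    rw [hc, ← Real.exp_mul]
    congr 1
    ring
  have h1 : Tendsto (fun d : ℕ => S (m d) / (C * (m d : ℝ) ^ (1-τ))) atTop
      (nhds 1) := hsum.comp hmtop
  have h3 : Tendsto (fun d : ℕ => C * (d:ℝ) ^ (1-τ) / S d) atTop (nhds 1) := by
    have h := hsum.inv₀ one_ne_zero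
    simp only [inv_div, inv_one] at h
    exact h
  have hprod := (h1.mul h2).mul h3
  have : (1 : ℝ) * c ^ (1-τ) * 1 = Real.exp ((1-τ)*x/τ) := by
    rw [hcpow]; ring
  rw [this] at hprod
  apply hprod.congr'
  filter_upwards [hmtop.eventually_ge_atTop 1, eventually_ge_atTop 1] with d hmd hd
  have hd0 : (0:ℝ) < d := by exact_mod_cast Nat.lt_of_lt_of_le Nat.zero_lt_one hd
  have hmd0 : (0:ℝ) < m d := by exact_mod_cast Nat.lt_of_lt_of_le Nat.zero_lt_one hmd
  have hM : (0:ℝ) < (m d : ℝ) ^ (1-τ) := Real.rpow_pos_of_pos hmd0 _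
  have hD : (0:ℝ) < (d : ℝ) ^ (1-τ) := Real.rpow_pos_of_pos hd0 _
  have hSd : 0 < S d := Finset.sum_pos (fun j _ => hapos j)
    ⟨1, Finset.mem_Icc.mpr ⟨le_refl 1, hd⟩⟩
  have hdr : ((m d : ℝ) / d) ^ (1-τ) = (m d : ℝ) ^ (1-τ) / (d:ℝ) ^ (1-τ) :=
    Real.div_rpow hmd0.le hd0.le _
  rw [hdr]
  field_simp
  change S (m d) = (S d * S (m d)) * (S d)⁻¹
  rw [mul_comm, ← mul_assoc, inv_mul_cancel₀ hSd.ne', one_mul]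
end
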